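/- Split conformal coverage upper bound: under the same exchangeability and almost-sure distinctness assumptions, P(Z_{n+1} ≤ q̂) ≤ 1 − α + 1/(n+1), where q̂ is the ⌈(1−α)(n+1)⌉-th order statistic of Z₁,…,Zₙ. -/

import Mathlib

open MeasureTheory Set
open scoped Classical

/-- The `k`-th smallest value (k ≥ 1) among `f 0, …, f (n-1)`. -/
noncomputable def orderStat (n : ℕ) (k : ℕ) (f : Fin n → ℝ) : ℝ :=
  sInf {t : ℝ | k ≤ (Finset.univ.filter fun i => f i ≤ t).card}

namespace SCC

variable {m : ℕ}

noncomputable def rnk (v : Fin m → ℝ) (j : Fin m) : ℕ :=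
  (Finset.univ.filter fun i => v i ≤ v j).card

lemma rnk_lt (v : Fin m → ℝ) {j j' : Fin m} (h : v j < v j') : rnk v j < rnk v j' := by
  apply Finset.card_lt_card
  constructor
  · intro i hi
    simp only [Finset.mem_filter, Finset.mem_univ, true_and] at *
    exact hi.trans h.le
  · intro hsub
    have := hsub (Finset.mem_filter.2 ⟨Finset.mem_univ j', le_refl _⟩)
    simp only [Finset.mem_filter, Finset.mem_univ, true_and] at this
    exact absurd this (not_le.2 h)

lemma rnk_inj (v : Fin m → ℝ) (hv : Function.Injective v) : Function.Injective (rnk v) := by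
  intro a b hab
  by_contra hne
  have hvne : v a ≠ v b := fun h => hne (hv h)
  rcases hvne.lt_or_gt with h | h
  · exact absurd hab (Nat.ne_of_lt (rnk_lt v h))
  · exact absurd hab.symm (Nat.ne_of_lt (rnk_lt v h))

lemma one_le_rnk (v : Fin m → ℝ) (j : Fin m) : 1 ≤ rnk v j := by
  have : j ∈ Finset.univ.filter fun i => v i ≤ v j :=
    Finset.mem_filter.2 ⟨Finset.mem_univ j, le_refl _⟩
  exact Finset.card_pos.2 ⟨j, this⟩

lemma rnk_le (v : Fin m → ℝ) (j : Fin m) : rnk v j ≤ m := by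
  calc rnk v j ≤ (Finset.univ : Finset (Fin m)).card := Finset.card_filter_le _ _
    _ = m := by simp

lemma card_rnk_le (v : Fin m → ℝ) (hv : Function.Injective v) {k : ℕ}
    (h1 : 1 ≤ k) (hkm : k ≤ m) :
    (Finset.univ.filter fun j => rnk v j ≤ k).card = k := by
  have hinj := rnk_inj v hv
  have himg : Finset.univ.image (rnk v) = Finset.Icc 1 m := by
    apply Finset.eq_of_subset_of_card_le
    · intro x hx
      simp only [Finset.mem_image, Finset.mem_univ, true_and] at hx
      obtain ⟨j, rfl⟩ := hx
      exact Finset.mem_Icc.2 ⟨one_le_rnk v j, rnk_le v j⟩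
    · rw [Finset.card_image_of_injective _ hinj]
      simp [Nat.card_Icc]
  have h2 : ((Finset.univ.filter fun j => rnk v j ≤ k).image (rnk v)).card
      = (Finset.univ.filter fun j => rnk v j ≤ k).card :=
    Finset.card_image_of_injective _ hinj
  rw [← h2]
  have h3 := Finset.filter_image (p := fun x => x ≤ k) (f := rnk v)
      (s := (Finset.univ : Finset (Fin m)))
  rw [← h3, himg]
  have h4 : (Finset.Icc 1 m).filter (fun x => x ≤ k) = Finset.Icc 1 k := by
    ext x
    simp only [Finset.mem_filter, Finset.mem_Icc]
    omega
  rw [h4, Nat.card_Icc]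
  omega


lemma rnk_last {n : ℕ} (v : Fin (n + 1) → ℝ) :
    rnk v (Fin.last n)
      = (Finset.univ.filter fun i : Fin n => v i.castSucc ≤ v (Fin.last n)).card + 1 := by
  unfold rnk
  rw [Finset.card_filter, Finset.card_filter, Fin.sum_univ_castSucc]
  simp

lemma orderStat_iff {n k : ℕ} (hn : 0 < n) (h1 : 1 ≤ k) (hkn : k ≤ n)
    (v : Fin (n + 1) → ℝ) (hv : Function.Injective v) :
    v (Fin.last n) ≤ orderStat n k (fun i => v i.castSucc) ↔ rnk v (Fin.last n) ≤ k := by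
  set f : Fin n → ℝ := fun i => v i.castSucc with hf
  set w : ℝ := v (Fin.last n) with hw
  set S : Set ℝ := {t : ℝ | k ≤ (Finset.univ.filter fun i => f i ≤ t).card} with hS
  have hfw : ∀ i : Fin n, f i ≠ w := by
    intro i h
    exact absurd (hv h) (Fin.ne_of_lt (Fin.castSucc_lt_last i))
  have : Nonempty (Fin n) := ⟨⟨0, hn⟩⟩
  have huniv : (Finset.univ : Finset (Fin n)).Nonempty := Finset.univ_nonempty
  have himg : (Finset.univ.image f).Nonempty := huniv.image f
  have hne : S.Nonempty := by
    refine ⟨(Finset.univ.image f).max' himg, ?_⟩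
    have : (Finset.univ.filter fun i => f i ≤ (Finset.univ.image f).max' himg)
        = Finset.univ := by
      apply Finset.filter_true_of_mem
      intro i _
      exact Finset.le_max' _ _ (Finset.mem_image_of_mem f (Finset.mem_univ i))
    simp only [hS, Set.mem_setOf_eq, this, Finset.card_univ, Fintype.card_fin]
    exact hkn
  have hbdd : BddBelow S := by
    refine ⟨(Finset.univ.image f).min' himg, ?_⟩
    intro t ht
    simp only [hS, Set.mem_setOf_eq] at ht
    have hpos : 0 < (Finset.univ.filter fun i => f i ≤ t).card := lt_of_lt_of_le h1 ht
    obtain ⟨i, hi⟩ := Finset.card_pos.1 hpos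
    simp only [Finset.mem_filter, Finset.mem_univ, true_and] at hi
    exact le_trans (Finset.min'_le _ _ (Finset.mem_image_of_mem f (Finset.mem_univ i))) hi
  rw [rnk_last]
  show w ≤ orderStat n k f ↔ (Finset.univ.filter fun i : Fin n => f i ≤ w).card + 1 ≤ k
  have hos : orderStat n k f = sInf S := rfl
  constructor
  · intro hle
    -- show card + 1 ≤ k
    have claim : (Finset.univ.filter fun i : Fin n => f i < sInf S).card < k := by
      set F := Finset.univ.filter fun i : Fin n => f i < sInf S with hF
      rcases F.eq_empty_or_nonempty with h | h
      · rw [h]; simpa using (show 0 < k from h1)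
      · have himgF : (F.image f).Nonempty := h.image f
        set t := (F.image f).max' himgF with ht
        have htlt : t < sInf S := by
          obtain ⟨i, hiF, hit⟩ := Finset.mem_image.1 ((F.image f).max'_mem himgF)
          rw [ht, ← hit]
          exact (Finset.mem_filter.1 hiF).2
        have htS : t ∉ S := fun hmem => absurd (csInf_le hbdd hmem) (not_le.2 htlt)
        simp only [hS, Set.mem_setOf_eq, not_le] at htS
        calc F.card ≤ (Finset.univ.filter fun i => f i ≤ t).card := by
              apply Finset.card_le_card
              intro i hi
              simp only [Finset.mem_filter, Finset.mem_univ, true_and]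
              exact Finset.le_max' _ _ (Finset.mem_image_of_mem f hi)
          _ < k := htS
    have hsub : (Finset.univ.filter fun i : Fin n => f i ≤ w).card
        ≤ (Finset.univ.filter fun i : Fin n => f i < sInf S).card := by
      apply Finset.card_le_card
      intro i hi
      simp only [Finset.mem_filter, Finset.mem_univ, true_and] at hi ⊢
      exact lt_of_lt_of_le (lt_of_le_of_ne hi (hfw i)) (hos ▸ hle)
    omega
  · intro hle
    rw [hos]
    apply le_csInf hne
    intro t ht
    by_contra hlt
    push_neg at hlt
    simp only [hS, Set.mem_setOf_eq] at ht
    have : (Finset.univ.filter fun i => f i ≤ t).card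
        ≤ (Finset.univ.filter fun i : Fin n => f i ≤ w).card := by
      apply Finset.card_le_card
      intro i hi
      simp only [Finset.mem_filter, Finset.mem_univ, true_and] at hi ⊢
      exact le_of_lt (lt_of_le_of_lt hi hlt)
    omega

end SCC

theorem split_conformal_coverage_upper
    {Ω : Type*} [MeasurableSpace Ω] (P : Measure Ω) [IsProbabilityMeasure P]
    (n : ℕ) (hn : 0 < n) (α : ℝ) (hα : α ∈ Set.Ioo (0 : ℝ) 1)
    (Z : Fin (n + 1) → Ω → ℝ) (hZ : ∀ i, Measurable (Z i))
    (hexch : ∀ π : Equiv.Perm (Fin (n + 1)),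
      Measure.map (fun ω => fun i => Z (π i) ω) P = Measure.map (fun ω => fun i => Z i ω) P)
    (hdist : ∀ᵐ ω ∂P, ∀ i j : Fin (n + 1), i ≠ j → Z i ω ≠ Z j ω)
    (hk : ⌈(1 - α) * (n + 1)⌉₊ ≤ n) :
    (P {ω | Z (Fin.last n) ω ≤
        orderStat n (⌈(1 - α) * (n + 1)⌉₊) (fun i : Fin n => Z i.castSucc ω)}).toReal ≤
      1 - α + 1 / (n + 1) := by
  set k := ⌈(1 - α) * (n + 1)⌉₊ with hkdef
  have hx0 : (0 : ℝ) < (1 - α) * (n + 1) := by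
    have h1 : (0:ℝ) < 1 - α := by linarith [hα.2]
    have h2 : (0:ℝ) < (n:ℝ) + 1 := by positivity
    positivity
  have hk1 : 1 ≤ k := Nat.one_le_iff_ne_zero.2 (by
    have := Nat.ceil_pos.2 hx0
    omega)
  -- rank function and events
  set R : Fin (n + 1) → Ω → ℕ := fun j ω => SCC.rnk (fun i => Z i ω) j with hR
  have hRmeas : ∀ j, Measurable (R j) := by
    intro j
    have heq : R j = fun ω => ∑ i : Fin (n + 1), if Z i ω ≤ Z j ω then 1 else 0 := by
      funext ω
      simp only [hR]
      unfold SCC.rnk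
      rw [Finset.card_filter]
    rw [heq]
    exact Finset.measurable_sum _ fun i _ =>
      Measurable.ite (measurableSet_le (hZ i) (hZ j)) measurable_const measurable_const
  set B : Fin (n + 1) → Set Ω := fun j => {ω | R j ω ≤ k} with hB
  have hBmeas : ∀ j, MeasurableSet (B j) := fun j => (hRmeas j) measurableSet_Iic
  -- the set in product space
  have hSprod : MeasurableSet {v : Fin (n + 1) → ℝ | SCC.rnk v (Fin.last n) ≤ k} := by
    have hm : Measurable fun v : Fin (n + 1) → ℝ => SCC.rnk v (Fin.last n) := by
      have heq : (fun v : Fin (n + 1) → ℝ => SCC.rnk v (Fin.last n))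
          = fun v => ∑ i : Fin (n + 1), if v i ≤ v (Fin.last n) then 1 else 0 := by
        funext v
        unfold SCC.rnk
        rw [Finset.card_filter]
      rw [heq]
      exact Finset.measurable_sum _ fun i _ =>
        Measurable.ite (measurableSet_le (measurable_pi_apply i) (measurable_pi_apply _))
          measurable_const measurable_const
    exact hm measurableSet_Iic
  -- all events have the same probability
  have hPB : ∀ j, P (B j) = P (B (Fin.last n)) := by
    intro j
    set π := Equiv.swap j (Fin.last n) with hπ
    have hmeas1 : Measurable fun ω => fun i => Z (π i) ω :=
      measurable_pi_lambda _ fun i => hZ (π i)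
    have hmeas2 : Measurable fun ω => fun i => Z i ω :=
      measurable_pi_lambda _ fun i => hZ i
    have h1 : (fun ω => fun i => Z (π i) ω) ⁻¹' {v : Fin (n + 1) → ℝ | SCC.rnk v (Fin.last n) ≤ k}
        = B j := by
      ext ω
      simp only [Set.mem_preimage, Set.mem_setOf_eq, hB, hR]
      have hπlast : π (Fin.last n) = j := Equiv.swap_apply_right _ _
      have hcard : SCC.rnk (fun i => Z (π i) ω) (Fin.last n)
          = SCC.rnk (fun i => Z i ω) j := by
        show (Finset.filter (fun i => Z (π i) ω ≤ Z (π (Fin.last n)) ω) Finset.univ).card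
            = (Finset.filter (fun i => Z i ω ≤ Z j ω) Finset.univ).card
        rw [hπlast]
        apply Finset.card_equiv π
        intro i
        simp
      rw [hcard]
    have h2 : (fun ω => fun i => Z i ω) ⁻¹' {v : Fin (n + 1) → ℝ | SCC.rnk v (Fin.last n) ≤ k}
        = B (Fin.last n) := rfl
    calc P (B j)
        = Measure.map (fun ω => fun i => Z (π i) ω) P
            {v : Fin (n + 1) → ℝ | SCC.rnk v (Fin.last n) ≤ k} := by
          rw [Measure.map_apply hmeas1 hSprod, h1]
      _ = Measure.map (fun ω => fun i => Z i ω) P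
            {v : Fin (n + 1) → ℝ | SCC.rnk v (Fin.last n) ≤ k} := by rw [hexch π]
      _ = P (B (Fin.last n)) := by
          rw [Measure.map_apply hmeas2 hSprod, h2]
  -- a.e. injectivity
  have hinj : ∀ᵐ ω ∂P, Function.Injective fun i => Z i ω := by
    filter_upwards [hdist] with ω hω
    intro a b hab
    by_contra hne
    exact hω a b hne hab
  -- sum of probabilities equals k
  have hsum : ∑ j : Fin (n + 1), P (B j) = (k : ENNReal) := by
    have hstep : ∀ j : Fin (n + 1),
        P (B j) = ∫⁻ ω, Set.indicator (B j) (1 : Ω → ENNReal) ω ∂P := by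
      intro j
      rw [lintegral_indicator_one (hBmeas j)]
    calc ∑ j : Fin (n + 1), P (B j)
        = ∑ j : Fin (n + 1), ∫⁻ ω, Set.indicator (B j) (1 : Ω → ENNReal) ω ∂P := by
          exact Finset.sum_congr rfl fun j _ => hstep j
      _ = ∫⁻ ω, ∑ j : Fin (n + 1), Set.indicator (B j) (1 : Ω → ENNReal) ω ∂P := by
          rw [lintegral_finset_sum]
          intro j _
          exact (measurable_one.indicator (hBmeas j))
      _ = ∫⁻ _, (k : ENNReal) ∂P := by
          apply lintegral_congr_ae
          filter_upwards [hinj] with ω hω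
          have hcard : (Finset.univ.filter fun j : Fin (n + 1) => R j ω ≤ k).card = k :=
            SCC.card_rnk_le (fun i => Z i ω) hω hk1 (by omega)
          have : ∑ j : Fin (n + 1), Set.indicator (B j) (1 : Ω → ENNReal) ω
              = ((Finset.univ.filter fun j : Fin (n + 1) => R j ω ≤ k).card : ENNReal) := by
            rw [Finset.card_filter]
            push_cast
            apply Finset.sum_congr rfl
            intro j _
            by_cases hj : R j ω ≤ k
            · simp [Set.indicator_of_mem, hB, hj]
            · simp [hB, hj]
          rw [this, hcard]
      _ = (k : ENNReal) := by
          simp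
  -- P(B last) = k/(n+1)
  have hlastval : P (B (Fin.last n)) = (k : ENNReal) / ((n : ENNReal) + 1) := by
    have h1 : ∑ j : Fin (n + 1), P (B j) = ((n : ENNReal) + 1) * P (B (Fin.last n)) := by
      rw [Finset.sum_congr rfl fun j _ => hPB j, Finset.sum_const, Finset.card_univ,
        Fintype.card_fin, nsmul_eq_mul]
      push_cast
      ring
    rw [h1] at hsum
    rw [ENNReal.eq_div_iff (by simp) (by simp)]
    exact hsum
  -- the target set coincides a.e. with B last
  have htarget : P {ω | Z (Fin.last n) ω ≤
      orderStat n k (fun i : Fin n => Z i.castSucc ω)} = P (B (Fin.last n)) := by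
    apply measure_congr
    rw [Filter.eventuallyEq_set]
    filter_upwards [hinj] with ω hω
    simpa [hB, hR] using SCC.orderStat_iff hn hk1 hk (fun i => Z i ω) hω
  rw [htarget, hlastval]
  -- final arithmetic
  have hnpos : (0 : ℝ) < (n : ℝ) + 1 := by positivity
  have htoReal : ((k : ENNReal) / ((n : ENNReal) + 1)).toReal = (k : ℝ) / ((n : ℝ) + 1) := by
    have h2 : ((n : ENNReal) + 1) = ((n + 1 : ℕ) : ENNReal) := by push_cast; ring
    rw [h2, ENNReal.toReal_div, ENNReal.toReal_natCast, ENNReal.toReal_natCast]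
    push_cast
    ring
  rw [htoReal]
  have hkb : (k : ℝ) ≤ (1 - α) * (n + 1) + 1 := by
    have := Nat.ceil_lt_add_one (le_of_lt hx0)
    exact le_of_lt this
  calc (k : ℝ) / ((n : ℝ) + 1) ≤ ((1 - α) * (n + 1) + 1) / ((n : ℝ) + 1) := by
        gcongr
      _ = 1 - α + 1 / (n + 1) := by
        field_simp
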